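/- For a Bell-diagonal state ρ with ordered eigenvalues λ₁ ≥ λ₂ ≥ λ₃ ≥ λ₄ summing to 1, the partial transpose of ρ on the first qubit has minimum eigenvalue 1/2 − λ₁. In particular ρ is PPT if and only if λ₁ ≤ 1/2. -/

import Mathlib

open Matrix Kronecker Complex ComplexOrder

noncomputable section

/-- Pauli X -/
def σX : Matrix (Fin 2) (Fin 2) ℂ := !![0, 1; 1, 0]
/-- Pauli Y -/
def σY : Matrix (Fin 2) (Fin 2) ℂ := !![0, -Complex.I; Complex.I, 0]
/-- Pauli Z -/
def σZ : Matrix (Fin 2) (Fin 2) ℂ := !![1, 0; 0, -1]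

/-- sign (-1)^a for a bit -/
def sgn (a : Bool) : ℝ := if a then -1 else 1

/-- three-qubit index type, qubit ordering (C, A, B) -/
abbrev Q3 := Fin 2 × Fin 2 × Fin 2

/-- the operator M_C ⊗ M_A ⊗ M_B on the three qubits ordered C, A, B -/
def op3 (MC MA MB : Matrix (Fin 2) (Fin 2) ℂ) : Matrix Q3 Q3 ℂ :=
  fun i j => MC i.1 j.1 * MA i.2.1 j.2.1 * MB i.2.2 j.2.2

/-- tensor product N_C ⊗ M_{AB} of a one-qubit operator (on C) with a two-qubit operator (on A,B) -/
def tensC_AB (N : Matrix (Fin 2) (Fin 2) ℂ)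
    (M : Matrix (Fin 2 × Fin 2) (Fin 2 × Fin 2) ℂ) : Matrix Q3 Q3 ℂ :=
  fun i j => N i.1 j.1 * M i.2 j.2

/-- partial transpose over qubit C -/
def ptC (M : Matrix Q3 Q3 ℂ) : Matrix Q3 Q3 ℂ := fun i j => M (j.1, i.2) (i.1, j.2)
/-- partial transpose over qubit A -/
def ptA (M : Matrix Q3 Q3 ℂ) : Matrix Q3 Q3 ℂ :=
  fun i j => M (i.1, (j.2.1, i.2.2)) (j.1, (i.2.1, j.2.2))
/-- partial transpose over qubit B -/
def ptB (M : Matrix Q3 Q3 ℂ) : Matrix Q3 Q3 ℂ :=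
  fun i j => M (i.1, (i.2.1, j.2.2)) (j.1, (j.2.1, i.2.2))

/-- partial transpose over the first qubit of a two-qubit operator -/
def pt1 (M : Matrix (Fin 2 × Fin 2) (Fin 2 × Fin 2) ℂ) : Matrix (Fin 2 × Fin 2) (Fin 2 × Fin 2) ℂ :=
  fun i j => M (j.1, i.2) (i.1, j.2)
/-- partial transpose over the second qubit of a two-qubit operator -/
def pt2 (M : Matrix (Fin 2 × Fin 2) (Fin 2 × Fin 2) ℂ) : Matrix (Fin 2 × Fin 2) (Fin 2 × Fin 2) ℂ :=
  fun i j => M (i.1, j.2) (j.1, i.2)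

/-- Bell-diagonal two-qubit operator (1/4)(I + s01 X⊗X + s10 Z⊗Z + s11 Y⊗Y) -/
def bellDiag (s01 s10 s11 : ℝ) : Matrix (Fin 2 × Fin 2) (Fin 2 × Fin 2) ℂ :=
  (1/4 : ℂ) • (1 + (s01 : ℂ) • (σX ⊗ₖ σX) + (s10 : ℂ) • (σZ ⊗ₖ σZ) + (s11 : ℂ) • (σY ⊗ₖ σY))

/-- single-qubit state (1/2)(I + s X) -/
def rhoC (s : ℝ) : Matrix (Fin 2) (Fin 2) ℂ := (1/2 : ℂ) • (1 + (s : ℂ) • σX)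

/-- controlled-phase gate between qubits C and A inside the three-qubit space -/
def CZCA : Matrix Q3 Q3 ℂ :=
  fun i j => if i = j then (if i.1 = 1 ∧ i.2.1 = 1 then -1 else 1) else 0
/-- controlled-phase gate between qubits A and B inside the three-qubit space -/
def CZAB : Matrix Q3 Q3 ℂ :=
  fun i j => if i = j then (if i.2.1 = 1 ∧ i.2.2 = 1 then -1 else 1) else 0

/-- lift of a two-qubit operator on (C,A) to the three-qubit space (identity on B) -/
def liftCA (V : Matrix (Fin 2 × Fin 2) (Fin 2 × Fin 2) ℂ) : Matrix Q3 Q3 ℂ :=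
  fun i j => V (i.1, i.2.1) (j.1, j.2.1) * (if i.2.2 = j.2.2 then 1 else 0)

/-- the state ρ_ABC = CZ_{AC} (ρ_C ⊗ ρ_AB) CZ_{AC} of the EDSS protocol -/
def rhoABC (s01 s10 s11 s : ℝ) : Matrix Q3 Q3 ℂ :=
  CZCA * tensC_AB (rhoC s) (bellDiag s01 s10 s11) * CZCA

/-- stabilizer K_C = X_C Z_A of the path graph C–A–B -/
def KC : Matrix Q3 Q3 ℂ := op3 σX σZ 1
/-- stabilizer K_A = Z_C X_A Z_B of the path graph C–A–B -/
def KA : Matrix Q3 Q3 ℂ := op3 σZ σX σZ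
/-- stabilizer K_B = Z_A X_B of the path graph C–A–B -/
def KB : Matrix Q3 Q3 ℂ := op3 1 σZ σX

/-- the vector |+⟩⊗|+⟩⊗|+⟩ -/
def plus3 : Q3 → ℂ := fun _ => ((1 : ℂ) / Real.sqrt 2) ^ 3

/-- the graph state of the three-vertex path C–A–B -/
def ψG : Q3 → ℂ := (CZCA * CZAB).mulVec plus3

/-- Z_x : product of Pauli-Z on the qubits indicated by the bit string x = (x_C, x_A, x_B) -/
def Zop (x : Bool × Bool × Bool) : Matrix Q3 Q3 ℂ :=
  op3 (if x.1 then σZ else 1) (if x.2.1 then σZ else 1) (if x.2.2 then σZ else 1)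

/-- the graph-state basis vector Z_x |ψ⟩ -/
def grState (x : Bool × Bool × Bool) : Q3 → ℂ := (Zop x).mulVec ψG

/-- K_x : product of the stabilizers indicated by the bit string x = (x_C, x_A, x_B) -/
def Kx (x : Bool × Bool × Bool) : Matrix Q3 Q3 ℂ :=
  (if x.1 then KC else 1) * (if x.2.1 then KA else 1) * (if x.2.2 then KB else 1)


set_option maxHeartbeats 1600000

def e4' : Fin 4 ≃ Fin 2 × Fin 2 where
  toFun := ![(0,0),(0,1),(1,0),(1,1)]
  invFun := fun p => ![![0,1],![2,3]] p.1 p.2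
  left_inv := by decide
  right_inv := by decide

def Bmat' (a b c : ℝ) : Matrix (Fin 4) (Fin 4) ℂ :=
  !![(1+b)/4, 0, 0, (a-c)/4;
     0, (1-b)/4, (a+c)/4, 0;
     0, (a+c)/4, (1-b)/4, 0;
     (a-c)/4, 0, 0, (1+b)/4]

lemma pt1_bell' (a b c : ℝ) : pt1 (bellDiag a b c) = bellDiag a b (-c) := by
  ext ⟨i1, i2⟩ ⟨j1, j2⟩
  fin_cases i1 <;> fin_cases i2 <;> fin_cases j1 <;> fin_cases j2 <;>
    norm_num [pt1, bellDiag, σX, σY, σZ, Matrix.one_apply, Prod.ext_iff] <;> ring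

lemma bell_eq' (a b c : ℝ) : bellDiag a b c = (Bmat' a b c).submatrix e4'.symm e4'.symm := by
  ext ⟨i1, i2⟩ ⟨j1, j2⟩
  fin_cases i1 <;> fin_cases i2 <;> fin_cases j1 <;> fin_cases j2 <;>
    norm_num [bellDiag, Bmat', σX, σY, σZ, Matrix.one_apply, Prod.ext_iff, e4',
      Matrix.submatrix_apply] <;> simp [Matrix.cons_val] <;> ring

lemma sub_eq' (a b c : ℝ) (r : ℂ) :
    (r • (1 : Matrix (Fin 2 × Fin 2) (Fin 2 × Fin 2) ℂ) - bellDiag a b c).submatrix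
      e4' e4' =
    !![r - (1+b)/4, 0, 0, -((a-c)/4);
       0, r - (1-b)/4, -((a+c)/4), 0;
       0, -((a+c)/4), r - (1-b)/4, 0;
       -((a-c)/4), 0, 0, r - (1+b)/4] := by
  ext i j
  fin_cases i <;> fin_cases j <;>
    norm_num [bellDiag, σX, σY, σZ, Matrix.one_apply, Prod.ext_iff, e4',
      Matrix.submatrix_apply] <;> ring

lemma det_bell' (a b c : ℝ) (r : ℂ) :
    (r • (1 : Matrix (Fin 2 × Fin 2) (Fin 2 × Fin 2) ℂ) - bellDiag a b c).det =
      (r - ((1+a+b-c)/4:ℝ)) * (r - ((1+a-b+c)/4:ℝ)) * (r - ((1-a+b+c)/4:ℝ)) *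
        (r - ((1-a-b-c)/4:ℝ)) := by
  rw [← Matrix.det_submatrix_equiv_self e4', sub_eq']
  simp [Matrix.det_succ_row_zero, Fin.sum_univ_succ, Fin.castSucc, Fin.castAdd, Fin.castLE, Fin.succAbove]
  push_cast
  ring

lemma mem_spectrum_bell' (a b c : ℝ) (r : ℂ) :
    r ∈ spectrum ℂ (bellDiag a b c) ↔
      (r = (((1+a+b-c)/4 : ℝ) : ℂ) ∨ r = (((1+a-b+c)/4 : ℝ) : ℂ) ∨
       r = (((1-a+b+c)/4 : ℝ) : ℂ) ∨ r = (((1-a-b-c)/4 : ℝ) : ℂ)) := by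
  rw [spectrum.mem_iff, Matrix.isUnit_iff_isUnit_det, isUnit_iff_ne_zero, not_ne_iff,
    Algebra.algebraMap_eq_smul_one, det_bell']
  simp only [mul_eq_zero, sub_eq_zero]
  tauto

lemma bell_decomp' (a b c : ℝ) : bellDiag a b c =
    (((1+a+b-c)/4 : ℝ) : ℂ) • bellDiag 1 1 (-1) + (((1+a-b+c)/4 : ℝ) : ℂ) • bellDiag 1 (-1) 1 +
    (((1-a+b+c)/4 : ℝ) : ℂ) • bellDiag (-1) 1 1 +
    (((1-a-b-c)/4 : ℝ) : ℂ) • bellDiag (-1) (-1) (-1) := by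
  have h4 : Bmat' a b c =
      (((1+a+b-c)/4 : ℝ) : ℂ) • Bmat' 1 1 (-1) + (((1+a-b+c)/4 : ℝ) : ℂ) • Bmat' 1 (-1) 1 +
      (((1-a+b+c)/4 : ℝ) : ℂ) • Bmat' (-1) 1 1 +
      (((1-a-b-c)/4 : ℝ) : ℂ) • Bmat' (-1) (-1) (-1) := by
    ext i j
    fin_cases i <;> fin_cases j <;>
      simp [Bmat', Matrix.add_apply, Matrix.smul_apply, smul_eq_mul, Matrix.vecHead,
        Matrix.vecTail] <;> push_cast <;> ring
  rw [bell_eq' a b c, bell_eq' 1 1 (-1), bell_eq' 1 (-1) 1, bell_eq' (-1) 1 1,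
    bell_eq' (-1) (-1) (-1), h4]
  ext i j
  simp [Matrix.submatrix_apply, Matrix.add_apply, Matrix.smul_apply]

lemma mul_self_bmat' (a b c : ℝ)
    (h : (Bmat' a b c)ᴴ * Bmat' a b c = Bmat' a b c) :
    (bellDiag a b c)ᴴ * bellDiag a b c = bellDiag a b c := by
  rw [bell_eq', Matrix.conjTranspose_submatrix, Matrix.submatrix_mul_equiv, h]

lemma proj1' : (bellDiag 1 1 (-1))ᴴ * bellDiag 1 1 (-1) = bellDiag 1 1 (-1) :=
  mul_self_bmat' _ _ _ (by
    ext i j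
    fin_cases i <;> fin_cases j <;>
      norm_num [Bmat', Matrix.mul_apply, Fin.sum_univ_succ, Matrix.conjTranspose_apply,
        map_ofNat])

lemma proj2' : (bellDiag 1 (-1) 1)ᴴ * bellDiag 1 (-1) 1 = bellDiag 1 (-1) 1 :=
  mul_self_bmat' _ _ _ (by
    ext i j
    fin_cases i <;> fin_cases j <;>
      norm_num [Bmat', Matrix.mul_apply, Fin.sum_univ_succ, Matrix.conjTranspose_apply,
        map_ofNat])

lemma proj3' : (bellDiag (-1) 1 1)ᴴ * bellDiag (-1) 1 1 = bellDiag (-1) 1 1 :=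
  mul_self_bmat' _ _ _ (by
    ext i j
    fin_cases i <;> fin_cases j <;>
      norm_num [Bmat', Matrix.mul_apply, Fin.sum_univ_succ, Matrix.conjTranspose_apply,
        map_ofNat])

lemma proj4' : (bellDiag (-1) (-1) (-1))ᴴ * bellDiag (-1) (-1) (-1) = bellDiag (-1) (-1) (-1) :=
  mul_self_bmat' _ _ _ (by
    ext i j
    fin_cases i <;> fin_cases j <;>
      norm_num [Bmat', Matrix.mul_apply, Fin.sum_univ_succ, Matrix.conjTranspose_apply,
        map_ofNat])

lemma proj_psd' (e1 e2 e3 : ℝ)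
    (h : (bellDiag e1 e2 e3)ᴴ * bellDiag e1 e2 e3 = bellDiag e1 e2 e3)
    (x : ℝ) (hx : 0 ≤ x) : ((x : ℂ) • bellDiag e1 e2 e3).PosSemidef := by
  have key : (x : ℂ) • bellDiag e1 e2 e3 =
      (((Real.sqrt x : ℝ) : ℂ) • bellDiag e1 e2 e3)ᴴ *
        (((Real.sqrt x : ℝ) : ℂ) • bellDiag e1 e2 e3) := by
    rw [Matrix.conjTranspose_smul, Matrix.smul_mul, Matrix.mul_smul, h, smul_smul]
    congr 1
    simp [Complex.star_def, Complex.conj_ofReal, ← Complex.ofReal_mul, Real.mul_self_sqrt hx]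
  rw [key]
  exact Matrix.posSemidef_conjTranspose_mul_self _

lemma psd_spec_nonneg' {M : Matrix (Fin 2 × Fin 2) (Fin 2 × Fin 2) ℂ} (hM : M.PosSemidef)
    {r : ℝ} (hr : (r : ℂ) ∈ spectrum ℂ M) : 0 ≤ r := by
  rw [spectrum.mem_iff, Matrix.isUnit_iff_isUnit_det, isUnit_iff_ne_zero, not_ne_iff,
    ← Matrix.exists_mulVec_eq_zero_iff] at hr
  obtain ⟨v, hv0, hv⟩ := hr
  have hMv : M.mulVec v = (r : ℂ) • v := by
    rw [Matrix.sub_mulVec, Algebra.algebraMap_eq_smul_one, Matrix.smul_mulVec,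
      Matrix.one_mulVec, sub_eq_zero] at hv
    exact hv.symm
  have h1 := hM.dotProduct_mulVec_nonneg v
  rw [hMv, dotProduct_smul] at h1
  have hpos : 0 < dotProduct (star v) v :=
    Matrix.dotProduct_star_self_pos_iff.mpr hv0
  rw [smul_eq_mul] at h1
  rw [Complex.lt_def] at hpos
  rw [Complex.le_def] at h1
  simp only [Complex.zero_re, Complex.zero_im, Complex.mul_re, Complex.mul_im,
    Complex.ofReal_re, Complex.ofReal_im] at h1 hpos
  by_contra hneg
  push_neg at hneg
  nlinarith [h1.1, hpos.1, hpos.2]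

/-- the partial transpose on the first qubit of a Bell-diagonal state with
ordered eigenvalues l1 ≥ l2 ≥ l3 ≥ l4 has minimum eigenvalue 1/2 − l1; PPT iff l1 ≤ 1/2. -/
theorem stmt3 (s01 s10 s11 : ℝ) (l1 l2 l3 l4 : ℝ)
    (hρ : (bellDiag s01 s10 s11).PosSemidef)
    (hset : ({l1, l2, l3, l4} : Multiset ℝ) =
      {(1 + s01 - s10 + s11) / 4, (1 - s01 + s10 + s11) / 4,
       (1 + s01 + s10 - s11) / 4, (1 - s01 - s10 - s11) / 4})
    (h12 : l2 ≤ l1) (h23 : l3 ≤ l2) (h34 : l4 ≤ l3) :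
    IsLeast {r : ℝ | (r : ℂ) ∈ spectrum ℂ (pt1 (bellDiag s01 s10 s11))} (1 / 2 - l1) ∧
    ((pt1 (bellDiag s01 s10 s11)).PosSemidef ↔ l1 ≤ 1 / 2) := by
  have hm : ({1/2-l1, 1/2-l2, 1/2-l3, 1/2-l4} : Multiset ℝ) =
      {(1-s01+s10-s11)/4, (1+s01-s10-s11)/4, (1-s01-s10+s11)/4, (1+s01+s10+s11)/4} := by
    have h := congrArg (Multiset.map (fun x : ℝ => 1/2 - x)) hset
    simp only [Multiset.insert_eq_cons, Multiset.map_cons, Multiset.map_singleton] at h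
    have e1 : (1:ℝ)/2 - (1+s01-s10+s11)/4 = (1-s01+s10-s11)/4 := by ring
    have e2 : (1:ℝ)/2 - (1-s01+s10+s11)/4 = (1+s01-s10-s11)/4 := by ring
    have e3 : (1:ℝ)/2 - (1+s01+s10-s11)/4 = (1-s01-s10+s11)/4 := by ring
    have e4 : (1:ℝ)/2 - (1-s01-s10-s11)/4 = (1+s01+s10+s11)/4 := by ring
    rw [e1, e2, e3, e4] at h
    simpa [Multiset.insert_eq_cons] using h
  have hspec : ∀ r : ℝ, ((r : ℂ) ∈ spectrum ℂ (pt1 (bellDiag s01 s10 s11))) ↔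
      (r = 1/2-l1 ∨ r = 1/2-l2 ∨ r = 1/2-l3 ∨ r = 1/2-l4) := by
    intro r
    rw [pt1_bell', mem_spectrum_bell']
    have hiff : (r = (1+s01+s10- -s11)/4 ∨ r = (1+s01-s10+ -s11)/4 ∨
        r = (1-s01+s10+ -s11)/4 ∨ r = (1-s01-s10- -s11)/4) ↔
        (r = 1/2-l1 ∨ r = 1/2-l2 ∨ r = 1/2-l3 ∨ r = 1/2-l4) := by
      have hmem : (r ∈ ({1/2-l1, 1/2-l2, 1/2-l3, 1/2-l4} : Multiset ℝ)) ↔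
          (r ∈ ({(1-s01+s10-s11)/4, (1+s01-s10-s11)/4, (1-s01-s10+s11)/4,
            (1+s01+s10+s11)/4} : Multiset ℝ)) := by rw [hm]
      simp only [Multiset.insert_eq_cons, Multiset.mem_cons, Multiset.mem_singleton] at hmem
      constructor
      · rintro (h|h|h|h)
        · exact hmem.mpr (by right; right; right; linarith)
        · exact hmem.mpr (by right; left; linarith)
        · exact hmem.mpr (by left; linarith)
        · exact hmem.mpr (by right; right; left; linarith)
      · intro h
        rcases hmem.mp h with h|h|h|h
        · right; right; left; linarith
        · right; left; linarith
        · right; right; right; linarith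
        · left; linarith
    rw [← hiff]
    norm_cast
  have hnn : ∀ x ∈ ({(1-s01+s10-s11)/4, (1+s01-s10-s11)/4, (1-s01-s10+s11)/4,
      (1+s01+s10+s11)/4} : Multiset ℝ), 1/2 - l1 ≤ x := by
    rw [← hm]
    intro x hx
    simp only [Multiset.insert_eq_cons, Multiset.mem_cons, Multiset.mem_singleton] at hx
    rcases hx with rfl|rfl|rfl|rfl <;> linarith
  have m1 : 1/2 - l1 ≤ (1-s01+s10-s11)/4 := hnn _ (by simp)
  have m2 : 1/2 - l1 ≤ (1+s01-s10-s11)/4 := hnn _ (by simp)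
  have m3 : 1/2 - l1 ≤ (1-s01-s10+s11)/4 := hnn _ (by simp)
  have m4 : 1/2 - l1 ≤ (1+s01+s10+s11)/4 := hnn _ (by simp)
  constructor
  · constructor
    · exact (hspec (1/2 - l1)).mpr (Or.inl rfl)
    · intro r hr
      rcases (hspec r).mp hr with rfl|rfl|rfl|rfl <;> linarith
  · constructor
    · intro hpsd
      have h0 : (0:ℝ) ≤ 1/2 - l1 :=
        psd_spec_nonneg' hpsd ((hspec (1/2 - l1)).mpr (Or.inl rfl))
      linarith
    · intro hl
      rw [pt1_bell', bell_decomp']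
      have p1 := proj_psd' _ _ _ proj1' ((1+s01+s10- -s11)/4) (by linarith)
      have p2 := proj_psd' _ _ _ proj2' ((1+s01-s10+ -s11)/4) (by linarith)
      have p3 := proj_psd' _ _ _ proj3' ((1-s01+s10+ -s11)/4) (by linarith)
      have p4 := proj_psd' _ _ _ proj4' ((1-s01-s10- -s11)/4) (by linarith)
      exact ((p1.add p2).add p3).add p4
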